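/- For an abelian irreducible L-module A over a finite-dimensional Lie algebra L, E_L(A) = D_L(A), where E_L(A) = {x ∈ L : α(x) = 0 for all α ∈ Z¹(L,A)} and D_L(A) is the intersection of all ideals R of L contained in I = C_L(A) such that I/R ≅_L A and I/R is a non-Frattini chief factor of L. -/

import Mathlib

/-- `I/R` is non-Frattini: some maximal subalgebra `M` of `L` containing `R`
(equivalently, a maximal subalgebra of `L/R`) does not contain `I`. -/
def NonFrattini {K L : Type*} [Field K] [LieRing L] [LieAlgebra K L]
    (I : Set L) (R : LieIdeal K L) : Prop :=
  ∃ M : LieSubalgebra K L, (R : Set L) ⊆ (M : Set L) ∧ M ≠ ⊤ ∧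
    (∀ S : LieSubalgebra K L, M ≤ S → S = M ∨ S = ⊤) ∧ ¬ I ⊆ (M : Set L)

section Aux

variable {K L : Type*} [Field K] [LieRing L] [LieAlgebra K L] [FiniteDimensional K L]

lemma lieSubalgebra_eq_top_of_toSubmodule {S : LieSubalgebra K L}
    (h : S.toSubmodule = ⊤) : S = ⊤ := by
  ext x
  simp only [LieSubalgebra.mem_top, iff_true]
  have : x ∈ S.toSubmodule := h ▸ Submodule.mem_top
  exact this

lemma exists_maximal_above (S : LieSubalgebra K L) (hS : S ≠ ⊤) :
    ∃ M : LieSubalgebra K L, S ≤ M ∧ M ≠ ⊤ ∧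
      ∀ T : LieSubalgebra K L, M ≤ T → T = M ∨ T = ⊤ := by
  suffices h : ∀ n : ℕ, ∀ S : LieSubalgebra K L, S ≠ ⊤ →
      Module.finrank K L ≤ Module.finrank K S.toSubmodule + n →
      ∃ M : LieSubalgebra K L, S ≤ M ∧ M ≠ ⊤ ∧
        ∀ T : LieSubalgebra K L, M ≤ T → T = M ∨ T = ⊤ by
    exact h (Module.finrank K L) S hS (Nat.le_add_left _ _)
  intro n
  induction n with
  | zero =>
    intro S hStop hle
    exfalso
    apply hStop
    apply lieSubalgebra_eq_top_of_toSubmodule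
    exact Submodule.eq_top_of_finrank_eq
      (le_antisymm (Submodule.finrank_le _) (by simpa using hle))
  | succ n ih =>
    intro S hStop hle
    by_cases hmax : ∀ T : LieSubalgebra K L, S ≤ T → T = S ∨ T = ⊤
    · exact ⟨S, le_refl S, hStop, hmax⟩
    · push_neg at hmax
      obtain ⟨T, hST, hTS, hTtop⟩ := hmax
      have hlt : S.toSubmodule < T.toSubmodule := by
        refine lt_of_le_of_ne (fun x hx => hST hx) (fun h => hTS ?_)
        exact ((LieSubalgebra.toSubmodule_inj T S).mp
          (by rw [h] : (T.toSubmodule : Submodule K L) = S.toSubmodule))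
      have := Submodule.finrank_lt_finrank_of_lt hlt
      obtain ⟨M, hTM, h1, h2⟩ := ih T hTtop (by omega)
      exact ⟨M, le_trans hST hTM, h1, h2⟩

end Aux

/-- For an abelian irreducible `L`-module `A` over a finite-dimensional Lie
algebra `L`, `E_L(A) = D_L(A)`: the common kernel of all 1-cocycles equals the
intersection of all ideals `R ⊆ I = C_L(A)` with `I/R ≅_L A` a non-Frattini
chief factor (taken to be `I` when no such `R` exists). -/
theorem stmt14 {K L A : Type*} [Field K] [LieRing L] [LieAlgebra K L]
    [FiniteDimensional K L]
    [AddCommGroup A] [Module K A] [LieRingModule L A] [LieModule K L A]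
    [LieModule.IsIrreducible K L A] :
    -- `E_L(A)`
    {x : L | ∀ α : L →ₗ[K] A, (∀ y z : L, α ⁅y, z⁆ = ⁅y, α z⁆ - ⁅z, α y⁆) → α x = 0} =
      -- `D_L(A)`
      {z : L | ∀ a : A, ⁅z, a⁆ = 0} ∩
        ⋂ R ∈ {R : LieIdeal K L |
          (R : Set L) ⊆ {z : L | ∀ a : A, ⁅z, a⁆ = 0} ∧
          -- `I/R ≅_L A`
          (∃ ψ : L →ₗ[K] A,
            (∀ x ∈ {z : L | ∀ a : A, ⁅z, a⁆ = 0}, ∀ y : L, ψ ⁅y, x⁆ = ⁅y, ψ x⁆) ∧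
            (∀ a : A, ∃ x ∈ {z : L | ∀ a : A, ⁅z, a⁆ = 0}, ψ x = a) ∧
            (∀ x ∈ {z : L | ∀ a : A, ⁅z, a⁆ = 0}, (ψ x = 0 ↔ x ∈ R))) ∧
          -- `I/R` non-Frattini
          NonFrattini {z : L | ∀ a : A, ⁅z, a⁆ = 0} R}, (R : Set L) := by
  classical
  -- brackets with a centralizing element centralize
  have hIdl : ∀ (y z : L), (∀ a : A, ⁅z, a⁆ = 0) → ∀ a : A, ⁅⁅y, z⁆, a⁆ = 0 := by
    intro y z hz a
    simp [lie_lie, hz]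
  have hIdl' : ∀ (z y : L), (∀ a : A, ⁅z, a⁆ = 0) → ∀ a : A, ⁅⁅z, y⁆, a⁆ = 0 := by
    intro z y hz a
    rw [← lie_skew z y, neg_lie, hIdl y z hz a, neg_zero]
  -- the centralizer, as a Lie ideal
  set Ic : LieIdeal K L :=
    { carrier := {z : L | ∀ a : A, ⁅z, a⁆ = 0}
      add_mem' := by intro p q hp hq a; rw [add_lie, hp a, hq a, add_zero]
      zero_mem' := by intro a; rw [zero_lie]
      smul_mem' := by intro c p hp a; rw [smul_lie, hp a, smul_zero]
      lie_mem := by intro y z hz; exact hIdl y z hz } with hIc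
  have memIc : ∀ z : L, z ∈ Ic ↔ ∀ a : A, ⁅z, a⁆ = 0 := fun z => Iff.rfl
  ext x
  simp only [Set.mem_setOf_eq, Set.mem_inter_iff, Set.mem_iInter, SetLike.mem_coe]
  constructor
  · -- E ⊆ D
    intro hx
    have hxI : ∀ a : A, ⁅x, a⁆ = 0 := by
      intro a
      let β : L →ₗ[K] A :=
        { toFun := fun y => ⁅y, a⁆
          map_add' := fun y z => add_lie y z a
          map_smul' := fun c y => smul_lie c y a }
      have hβ : ∀ y z : L, β ⁅y, z⁆ = ⁅y, β z⁆ - ⁅z, β y⁆ := fun y z => by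
        simp only [β, LinearMap.coe_mk, AddHom.coe_mk]
        exact lie_lie y z a
      exact hx β hβ
    refine ⟨hxI, ?_⟩
    rintro R ⟨hRI, ⟨ψ, hequiv, hsurj, hker⟩, M, hRM, hMtop, hMmax, hIM⟩
    -- M ⊔ I = ⊤ as submodules
    have hMIsup : M.toSubmodule ⊔ Ic.toSubmodule = ⊤ := by
      set S : LieSubalgebra K L :=
        { toSubmodule := M.toSubmodule ⊔ Ic.toSubmodule
          lie_mem' := by
            intro p q hp hq
            obtain ⟨m, hm, i, hi, rfl⟩ := Submodule.mem_sup.mp hp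
            obtain ⟨m', hm', i', hi', rfl⟩ := Submodule.mem_sup.mp hq
            have h1 : ⁅m, m'⁆ ∈ M.toSubmodule := M.lie_mem hm hm'
            have h2 : ⁅m, i'⁆ ∈ Ic.toSubmodule := Ic.lie_mem hi'
            have h3 : ⁅i, m'⁆ ∈ Ic.toSubmodule := by
              intro a; exact hIdl' i m' hi a
            have h4 : ⁅i, i'⁆ ∈ Ic.toSubmodule := Ic.lie_mem hi'
            have : ⁅m + i, m' + i'⁆ = ⁅m, m'⁆ + (⁅m, i'⁆ + (⁅i, m'⁆ + ⁅i, i'⁆)) := by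
              rw [add_lie, lie_add, lie_add]; abel
            rw [this]
            exact Submodule.add_mem _ (Submodule.mem_sup_left h1)
              (Submodule.mem_sup_right (Submodule.add_mem _ h2 (Submodule.add_mem _ h3 h4))) }
      have hMS : M ≤ S := fun y hy => Submodule.mem_sup_left hy
      obtain ⟨z0, hz0I, hz0M⟩ := Set.not_subset.mp hIM
      have hz0S : z0 ∈ S := Submodule.mem_sup_right (by exact hz0I)
      have hStop : S = ⊤ := by
        rcases hMmax S hMS with h | h
        · exact absurd (h ▸ hz0S) hz0M
        · exact h
      have : (S : Submodule K L) = ⊤ := by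
        rw [hStop]; rfl
      exact this
    -- elements of M ∩ I are killed by ψ
    have key : ∀ w : L, w ∈ M → (∀ a : A, ⁅w, a⁆ = 0) → ψ w = 0 := by
      set N : LieSubmodule K L A :=
        { carrier := {a : A | ∃ w : L, w ∈ M ∧ (∀ b : A, ⁅w, b⁆ = 0) ∧ ψ w = a}
          add_mem' := by
            rintro p q ⟨w, hw, hwI, rfl⟩ ⟨w', hw', hwI', rfl⟩
            exact ⟨w + w', M.add_mem hw hw',
              fun b => by rw [add_lie, hwI b, hwI' b, add_zero], map_add ψ w w'⟩
          zero_mem' := ⟨0, M.zero_mem, fun b => zero_lie b, map_zero ψ⟩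
          smul_mem' := by
            rintro c p ⟨w, hw, hwI, rfl⟩
            exact ⟨c • w, M.smul_mem c hw,
              fun b => by rw [smul_lie, hwI b, smul_zero], map_smul ψ c w⟩
          lie_mem := by
            rintro y p ⟨w, hw, hwI, rfl⟩
            obtain ⟨m, hm, i, hi, rfl⟩ := Submodule.mem_sup.mp (hMIsup ▸ Submodule.mem_top :
              y ∈ M.toSubmodule ⊔ Ic.toSubmodule)
            refine ⟨⁅m, w⁆, M.lie_mem hm hw, hIdl m w hwI, ?_⟩
            rw [hequiv w hwI m, add_lie, hi (ψ w), add_zero] }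
      have hNtop : N ≠ ⊤ := by
        intro hN
        apply hIM
        intro z hz
        have hz' : ∀ a : A, ⁅z, a⁆ = 0 := hz
        have : ψ z ∈ N := hN ▸ LieSubmodule.mem_top (ψ z)
        obtain ⟨w, hw, hwI, hwe⟩ := this
        have hzw : ∀ a : A, ⁅z - w, a⁆ = 0 := by
          intro a; rw [sub_lie, hz' a, hwI a, sub_zero]
        have hψ : ψ (z - w) = 0 := by rw [map_sub, hwe, sub_self]
        have hzwR : z - w ∈ R := (hker (z - w) hzw).mp hψ
        have hzwM : z - w ∈ M := hRM hzwR
        have := M.add_mem hzwM hw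
        rwa [sub_add_cancel] at this
      have hNbot : N = ⊥ := (eq_bot_or_eq_top N).resolve_right hNtop
      intro w hw hwI
      have : ψ w ∈ N := ⟨w, hw, hwI, rfl⟩
      rw [hNbot] at this
      exact this
    -- a complement to M.toSubmodule contained in Ic
    obtain ⟨C', hC'⟩ := Submodule.exists_isCompl
      ((M.toSubmodule ⊓ Ic.toSubmodule).comap (Ic.toSubmodule).subtype)
    set C : Submodule K L := C'.map (Ic.toSubmodule).subtype with hC
    have hCI : C ≤ Ic.toSubmodule := by
      rintro z ⟨c, hc, rfl⟩; exact c.2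
    have hsupC : (M.toSubmodule ⊓ Ic.toSubmodule) ⊔ C = Ic.toSubmodule := by
      have := congrArg (Submodule.map (Ic.toSubmodule).subtype) hC'.sup_eq_top
      rwa [Submodule.map_sup, Submodule.map_comap_subtype, Submodule.map_subtype_top,
        inf_eq_right.mpr (inf_le_right : M.toSubmodule ⊓ Ic.toSubmodule ≤ Ic.toSubmodule)] at this
    have hdisj : Disjoint M.toSubmodule C := by
      rw [Submodule.disjoint_def]
      rintro z hzM ⟨c, hc, rfl⟩
      have hmem : c ∈ (M.toSubmodule ⊓ Ic.toSubmodule).comap (Ic.toSubmodule).subtype :=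
        ⟨hzM, c.2⟩
      have := Submodule.disjoint_def.mp hC'.disjoint c hmem hc
      rw [this]; rfl
    have hcodis : M.toSubmodule ⊔ C = ⊤ := by
      rw [← hMIsup, ← hsupC, ← sup_assoc, sup_inf_self]
    have hcompl : IsCompl M.toSubmodule C := ⟨hdisj, codisjoint_iff.mpr hcodis⟩
    set α : L →ₗ[K] A := LinearMap.ofIsCompl hcompl 0 (ψ.comp C.subtype) with hα
    have hαM : ∀ m : L, m ∈ M → α m = 0 := by
      intro m hm
      have := LinearMap.ofIsCompl_left_apply hcompl (⟨m, hm⟩ : M.toSubmodule)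
        (φ := (0 : M.toSubmodule →ₗ[K] A)) (ψ := ψ.comp C.subtype)
      simpa [hα] using this
    have hαC : ∀ c : L, c ∈ C → α c = ψ c := by
      intro c hc
      have := LinearMap.ofIsCompl_right_apply hcompl (⟨c, hc⟩ : C)
        (φ := (0 : M.toSubmodule →ₗ[K] A)) (ψ := ψ.comp C.subtype)
      simpa [hα] using this
    have hαI : ∀ z : L, (∀ a : A, ⁅z, a⁆ = 0) → α z = ψ z := by
      intro z hz
      have hzI : z ∈ Ic.toSubmodule := hz
      obtain ⟨u, hu, v, hv, rfl⟩ := Submodule.mem_sup.mp (hsupC ▸ hzI)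
      have hψu : ψ u = 0 := key u hu.1 hu.2
      rw [map_add, map_add, hαM u hu.1, hαC v hv, hψu, zero_add]
    have hcoc : ∀ y z : L, α ⁅y, z⁆ = ⁅y, α z⁆ - ⁅z, α y⁆ := by
      intro y z
      obtain ⟨m, hm, i, hi, rfl⟩ := Submodule.mem_sup.mp (hMIsup ▸ Submodule.mem_top :
        y ∈ M.toSubmodule ⊔ Ic.toSubmodule)
      obtain ⟨m', hm', i', hi', rfl⟩ := Submodule.mem_sup.mp (hMIsup ▸ Submodule.mem_top :
        z ∈ M.toSubmodule ⊔ Ic.toSubmodule)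
      have hiI : ∀ a : A, ⁅i, a⁆ = 0 := hi
      have hi'I : ∀ a : A, ⁅i', a⁆ = 0 := hi'
      have hexp : ⁅m + i, m' + i'⁆ = ⁅m, m'⁆ + (⁅m, i'⁆ + (⁅i, m'⁆ + ⁅i, i'⁆)) := by
        rw [add_lie, lie_add, lie_add]; abel
      have e1 : α ⁅m, m'⁆ = 0 := hαM _ (M.lie_mem hm hm')
      have e2 : α ⁅m, i'⁆ = ⁅m, ψ i'⁆ := by
        rw [hαI _ (hIdl m i' hi'I), hequiv i' hi'I m]
      have e3 : α ⁅i, m'⁆ = -⁅m', ψ i⁆ := by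
        rw [hαI _ (hIdl' i m' hiI), ← lie_skew i m', map_neg, hequiv i hiI m']
      have e4 : α ⁅i, i'⁆ = 0 := by
        rw [hαI _ (hIdl i i' hi'I), hequiv i' hi'I i, hiI (ψ i')]
      have eαy : α (m + i) = ψ i := by
        rw [map_add, hαM m hm, hαI i hiI, zero_add]
      have eαz : α (m' + i') = ψ i' := by
        rw [map_add, hαM m' hm', hαI i' hi'I, zero_add]
      rw [hexp, map_add, map_add, map_add, e1, e2, e3, e4, eαy, eαz,
        add_lie, add_lie, hiI (ψ i'), hi'I (ψ i)]
      abel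
    have := hx α hcoc
    rw [hαI x hxI] at this
    exact (hker x hxI).mp this
  · -- D ⊆ E
    rintro ⟨hxI, hR⟩ α hcoc
    by_cases hαI : ∀ z : L, (∀ a : A, ⁅z, a⁆ = 0) → α z = 0
    · exact hαI x hxI
    · push_neg at hαI
      obtain ⟨z0, hz0I, hz0⟩ := hαI
      have hequiv : ∀ z : L, (∀ a : A, ⁅z, a⁆ = 0) → ∀ y : L, α ⁅y, z⁆ = ⁅y, α z⁆ := by
        intro z hz y
        rw [hcoc y z, hz (α y), sub_zero]
      -- the image of the centralizer is a nonzero Lie submodule, hence all of A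
      set N : LieSubmodule K L A :=
        { carrier := {a : A | ∃ z : L, (∀ b : A, ⁅z, b⁆ = 0) ∧ α z = a}
          add_mem' := by
            rintro p q ⟨z, hz, rfl⟩ ⟨z', hz', rfl⟩
            exact ⟨z + z', fun b => by rw [add_lie, hz b, hz' b, add_zero],
              map_add α z z'⟩
          zero_mem' := ⟨0, fun b => zero_lie b, map_zero α⟩
          smul_mem' := by
            rintro c p ⟨z, hz, rfl⟩
            exact ⟨c • z, fun b => by rw [smul_lie, hz b, smul_zero], map_smul α c z⟩
          lie_mem := by
            rintro y p ⟨z, hz, rfl⟩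
            exact ⟨⁅y, z⁆, hIdl y z hz, hequiv z hz y⟩ }
      have hNtop : N = ⊤ := by
        refine (eq_bot_or_eq_top N).resolve_left (fun h => hz0 ?_)
        have : α z0 ∈ N := ⟨z0, hz0I, rfl⟩
        rw [h] at this
        exact this
      have hsurj : ∀ a : A, ∃ z : L, (∀ b : A, ⁅z, b⁆ = 0) ∧ α z = a := by
        intro a
        have : a ∈ N := hNtop ▸ LieSubmodule.mem_top a
        exact this
      -- the kernel of α in the centralizer, as a Lie ideal
      set R0 : LieIdeal K L :=
        { carrier := {z : L | (∀ a : A, ⁅z, a⁆ = 0) ∧ α z = 0}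
          add_mem' := by
            rintro p q ⟨hp, hp0⟩ ⟨hq, hq0⟩
            exact ⟨fun a => by rw [add_lie, hp a, hq a, add_zero],
              by rw [map_add, hp0, hq0, add_zero]⟩
          zero_mem' := ⟨fun a => zero_lie a, map_zero α⟩
          smul_mem' := by
            rintro c p ⟨hp, hp0⟩
            exact ⟨fun a => by rw [smul_lie, hp a, smul_zero],
              by rw [map_smul, hp0, smul_zero]⟩
          lie_mem := by
            rintro y z ⟨hz, hz0⟩
            exact ⟨hIdl y z hz, by rw [hequiv z hz y, hz0, lie_zero]⟩ } with hR0
      -- ker α is a subalgebra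
      set Kα : LieSubalgebra K L :=
        { toSubmodule := LinearMap.ker α
          lie_mem' := by
            intro y z hy hz
            have hy' : α y = 0 := hy
            have hz' : α z = 0 := hz
            show α ⁅y, z⁆ = 0
            rw [hcoc y z, hy', hz', lie_zero, lie_zero, sub_zero] }
      have hKtop : Kα ≠ ⊤ := by
        intro h
        apply hz0
        have : z0 ∈ Kα := h ▸ trivial
        exact this
      obtain ⟨M, hKM, hMt, hMmax⟩ := exists_maximal_above Kα hKtop
      have hIMn : ¬ {z : L | ∀ a : A, ⁅z, a⁆ = 0} ⊆ (M : Set L) := by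
        intro hIM
        apply hMt
        have hall : ∀ y : L, y ∈ M := by
          intro y
          obtain ⟨z, hzI, hze⟩ := hsurj (α y)
          have h1 : y - z ∈ Kα := by
            have : α (y - z) = 0 := by rw [map_sub, hze, sub_self]
            exact this
          have h2 : y - z ∈ M := hKM h1
          have h3 : z ∈ M := hIM hzI
          have := M.add_mem h2 h3
          rwa [sub_add_cancel] at this
        ext y
        simp only [LieSubalgebra.mem_top, iff_true]
        exact hall y
      have hnf : NonFrattini {z : L | ∀ a : A, ⁅z, a⁆ = 0} R0 := by
        refine ⟨M, ?_, hMt, hMmax, hIMn⟩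
        intro z hz
        have hz' : z ∈ R0 := hz
        exact hKM (show z ∈ Kα from hz'.2)
      have hxR0 : x ∈ R0 := by
        refine hR R0 ⟨fun z hz => hz.1, ⟨α, fun z hz y => hequiv z hz y,
          fun a => (hsurj a).imp (fun z hz => ⟨hz.1, hz.2⟩), fun z hz => ?_⟩, hnf⟩
        exact ⟨fun h0 => ⟨hz, h0⟩, fun h0 => h0.2⟩
      exact hxR0.2
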